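/- Consider the edge-coloring shift Σ(B_{e;8}) of the eight-vertex model: colorings of the edges of Z² by {0,1} such that at every vertex the sum of the four incident edge colors is even. Then Σ(B_{e;8}) has strong specification with constant M = 2. -/

import Mathlib

/-- An edge of the lattice `ℤ²`: `(v, true)` is the horizontal edge from `v`
to `v + (1,0)`, and `(v, false)` is the vertical edge from `v` to `v + (0,1)`. -/
abbrev Edge := (ℤ × ℤ) × Bool

/-- The two endpoints of an edge. -/
def edgeEnds (e : Edge) : Set (ℤ × ℤ) :=
  {e.1, if e.2 then (e.1.1 + 1, e.1.2) else (e.1.1, e.1.2 + 1)}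

/-- Euclidean distance between two lattice points of `ℤ²`. -/
noncomputable def eDist (x y : ℤ × ℤ) : ℝ :=
  Real.sqrt (((x.1 - y.1 : ℤ) : ℝ) ^ 2 + ((x.2 - y.2 : ℤ) : ℝ) ^ 2)

/-- Eight-vertex admissibility: at every vertex the sum of the colors of the
four incident edges is even. -/
def Adm8 (W : Edge → ZMod 2) : Prop :=
  ∀ v : ℤ × ℤ,
    W ((v.1 - 1, v.2), true) + W ((v.1, v.2 - 1), false) + W (v, true) + W (v, false) = 0

/-! ### Auxiliary material -/

/-- Signless partial sum of `g` over the integers between `0` and `n`. -/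
noncomputable def psum (g : ℤ → ZMod 2) (n : ℤ) : ZMod 2 :=
  ∑ k ∈ Finset.Ioc (min n 0) (max n 0), g k

lemma psum_step (g : ℤ → ZMod 2) (n : ℤ) : psum g n + psum g (n - 1) = g n := by
  have h1 : Finset.Ioc (n - 1) n = {n} := by
    ext m; simp only [Finset.mem_Ioc, Finset.mem_singleton]; omega
  rcases le_or_gt n 0 with h | h
  · have hu : Finset.Ioc (n - 1) n ∪ Finset.Ioc n 0 = Finset.Ioc (n - 1) 0 :=
      Finset.Ioc_union_Ioc_eq_Ioc (by omega) h
    have hdj : Disjoint (Finset.Ioc (n - 1) n) (Finset.Ioc n 0) := by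
      rw [Finset.disjoint_left]
      intro a ha ha'
      simp only [Finset.mem_Ioc] at ha ha'
      omega
    have h2 : ∑ k ∈ Finset.Ioc (n - 1) 0, g k
        = (∑ k ∈ Finset.Ioc (n - 1) n, g k) + ∑ k ∈ Finset.Ioc n 0, g k := by
      rw [← hu, Finset.sum_union hdj]
    unfold psum
    rw [min_eq_left h, max_eq_right h, min_eq_left (by omega : n - 1 ≤ (0:ℤ)),
      max_eq_right (by omega : n - 1 ≤ (0:ℤ)), h2, h1, Finset.sum_singleton]
    exact (by decide : ∀ a b : ZMod 2, a + (b + a) = b) _ _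
  · have hu : Finset.Ioc 0 (n - 1) ∪ Finset.Ioc (n - 1) n = Finset.Ioc 0 n :=
      Finset.Ioc_union_Ioc_eq_Ioc (by omega) (by omega)
    have hdj : Disjoint (Finset.Ioc 0 (n - 1)) (Finset.Ioc (n - 1) n) := by
      rw [Finset.disjoint_left]
      intro a ha ha'
      simp only [Finset.mem_Ioc] at ha ha'
      omega
    have h2 : ∑ k ∈ Finset.Ioc 0 n, g k
        = (∑ k ∈ Finset.Ioc 0 (n - 1), g k) + ∑ k ∈ Finset.Ioc (n - 1) n, g k := by
      rw [← hu, Finset.sum_union hdj]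
    unfold psum
    rw [min_eq_right h.le, max_eq_left h.le, min_eq_right (by omega : (0:ℤ) ≤ n - 1),
      max_eq_left (by omega : (0:ℤ) ≤ n - 1), h2, h1, Finset.sum_singleton]
    exact (by decide : ∀ a b : ZMod 2, (a + b) + a = b) _ _

lemma psum_tel (f : ℤ → ZMod 2) (n : ℤ) :
    psum (fun k => f (k - 1) + f k) n = f 0 + f n := by
  induction n using Int.induction_on with
  | zero => simp [psum, (by decide : ∀ a : ZMod 2, a + a = 0)]
  | succ i ih =>
      have hs : psum (fun k => f (k - 1) + f k) ((i : ℤ) + 1)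
          + psum (fun k => f (k - 1) + f k) ((i : ℤ) + 1 - 1)
          = f ((i : ℤ) + 1 - 1) + f ((i : ℤ) + 1) := psum_step _ _
      simp only [add_sub_cancel_right] at hs
      have h3 : psum (fun k => f (k - 1) + f k) ((i : ℤ) + 1)
          = (f (i : ℤ) + f ((i : ℤ) + 1)) + psum (fun k => f (k - 1) + f k) (i : ℤ) :=
        (by decide : ∀ a b c : ZMod 2, a + b = c → a = c + b) _ _ _ hs
      rw [h3, ih]
      exact (by decide : ∀ a b c : ZMod 2, (a + b) + (c + a) = c + b) _ _ _
  | pred i ih =>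
      have hs : psum (fun k => f (k - 1) + f k) (-(i : ℤ))
          + psum (fun k => f (k - 1) + f k) (-(i : ℤ) - 1)
          = f (-(i : ℤ) - 1) + f (-(i : ℤ)) := psum_step _ _
      have h3 : psum (fun k => f (k - 1) + f k) (-(i : ℤ) - 1)
          = psum (fun k => f (k - 1) + f k) (-(i : ℤ)) + (f (-(i : ℤ) - 1) + f (-(i : ℤ))) :=
        (by decide : ∀ a b c : ZMod 2, a + b = c → b = a + c) _ _ _ hs
      rw [h3, ih]
      exact (by decide : ∀ a b c : ZMod 2, (a + b) + (c + b) = a + c) _ _ _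

lemma psum_add (g h : ℤ → ZMod 2) (n : ℤ) :
    psum (fun k => g k + h k) n = psum g n + psum h n := by
  unfold psum; exact Finset.sum_add_distrib

lemma psum_congr {g h : ℤ → ZMod 2} (he : ∀ k, g k = h k) (n : ℤ) :
    psum g n = psum h n := by
  unfold psum; exact Finset.sum_congr rfl fun k _ => he k

/-- Every admissible configuration is the coboundary of a face potential
(faces are indexed by their lower-left corner). -/
lemma exists_pot (W : Edge → ZMod 2) (h : Adm8 W) :
    ∃ F : ℤ × ℤ → ZMod 2,
      (∀ p : ℤ × ℤ, W (p, true) = F p + F (p.1, p.2 - 1)) ∧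
      (∀ p : ℤ × ℤ, W (p, false) = F (p.1 - 1, p.2) + F p) := by
  refine ⟨fun p => psum (fun k => W ((0, k), true)) p.2
      + psum (fun k => W ((k, p.2), false)) p.1, ?_, ?_⟩
  · rintro ⟨x, y⟩
    have hrow : ∀ k : ℤ, W ((k, y), false) + W ((k, y - 1), false)
        = W ((k - 1, y), true) + W ((k, y), true) := fun k =>
      (by decide : ∀ a b c d : ZMod 2, a + b + c + d = 0 → d + b = a + c)
        _ _ _ _ (h (k, y))
    have h1 : psum (fun k => W ((0, k), true)) y + psum (fun k => W ((0, k), true)) (y - 1)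
        = W ((0, y), true) := psum_step _ y
    have hA : psum (fun k => W ((k, y), false)) x + psum (fun k => W ((k, y - 1), false)) x
        = psum (fun k => W ((k, y), false) + W ((k, y - 1), false)) x :=
      (psum_add _ _ _).symm
    have hB : psum (fun k => W ((k, y), false) + W ((k, y - 1), false)) x
        = psum (fun k => W ((k - 1, y), true) + W ((k, y), true)) x := psum_congr hrow x
    have hC : psum (fun k => W ((k - 1, y), true) + W ((k, y), true)) x
        = W ((0, y), true) + W ((x, y), true) := psum_tel (fun k => W ((k, y), true)) x
    have h2 := hA.trans (hB.trans hC)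
    exact (by decide : ∀ a b c d ee w : ZMod 2,
      a + b = ee → c + d = ee + w → w = (a + c) + (b + d)) _ _ _ _ _ _ h1 h2
  · rintro ⟨x, y⟩
    have h2 : psum (fun k => W ((k, y), false)) x + psum (fun k => W ((k, y), false)) (x - 1)
        = W ((x, y), false) := psum_step _ x
    exact (by decide : ∀ a b c w : ZMod 2, b + c = w → w = (a + c) + (a + b)) _ _ _ _ h2

/-- The two faces adjacent to an edge (faces are indexed by lower-left corner). -/
def adjF (e : Edge) (f : ℤ × ℤ) : Prop :=
  if e.2 then f = e.1 ∨ f = (e.1.1, e.1.2 - 1) else f = e.1 ∨ f = (e.1.1 - 1, e.1.2)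

lemma adjF_base {e : Edge} {f : ℤ × ℤ} (h : adjF e f) :
    (e.1.1 = f.1 ∨ e.1.1 = f.1 + 1) ∧ (e.1.2 = f.2 ∨ e.1.2 = f.2 + 1) := by
  obtain ⟨p, b⟩ := e
  cases b <;> simp only [adjF, if_true, if_false, Bool.false_eq_true] at h <;>
    rcases h with rfl | rfl <;> simp

lemma close_lt_two (x y : ℤ × ℤ) (h1 : x.1 - y.1 ≤ 1) (h1' : y.1 - x.1 ≤ 1)
    (h2 : x.2 - y.2 ≤ 1) (h2' : y.2 - x.2 ≤ 1) :
    eDist x y < 2 := by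
  unfold eDist
  have a1 : ((x.1 - y.1 : ℤ) : ℝ) ^ 2 ≤ 1 := by
    have : (x.1 - y.1) ^ 2 ≤ 1 := by nlinarith
    exact_mod_cast this
  have a2 : ((x.2 - y.2 : ℤ) : ℝ) ^ 2 ≤ 1 := by
    have : (x.2 - y.2) ^ 2 ≤ 1 := by nlinarith
    exact_mod_cast this
  have hlt : ((x.1 - y.1 : ℤ) : ℝ) ^ 2 + ((x.2 - y.2 : ℤ) : ℝ) ^ 2 < 4 := by linarith
  have hs := Real.sqrt_lt_sqrt (by positivity) hlt
  have h4 : Real.sqrt 4 = 2 := by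
    rw [show (4 : ℝ) = 2 ^ 2 by norm_num, Real.sqrt_sq (by norm_num)]
  linarith

open Classical in
/-- The gluing correction: `F₁ + F₂` on faces adjacent to `E₂`, `0` elsewhere. -/
noncomputable def glueX (E₂ : Set Edge) (F₁ F₂ : ℤ × ℤ → ZMod 2) (f : ℤ × ℤ) : ZMod 2 :=
  if ∃ e ∈ E₂, adjF e f then F₁ f + F₂ f else 0

/-- The glued potential. -/
noncomputable def glueG (E₂ : Set Edge) (F₁ F₂ : ℤ × ℤ → ZMod 2) (f : ℤ × ℤ) : ZMod 2 :=
  F₁ f + glueX E₂ F₁ F₂ f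

/-- The eight-vertex edge-coloring shift has strong specification with
constant `M = 2`: any two admissible edge patterns on sets of edges at
Euclidean distance `≥ 2` extend to a common globally admissible configuration. -/
theorem eightVertex_strongSpec (E₁ E₂ : Set Edge)
    (hd : ∀ e₁ ∈ E₁, ∀ e₂ ∈ E₂, ∀ x ∈ edgeEnds e₁, ∀ y ∈ edgeEnds e₂,
      (2 : ℝ) ≤ eDist x y)
    (W₁ W₂ : Edge → ZMod 2) (h₁ : Adm8 W₁) (h₂ : Adm8 W₂) :
    ∃ W, Adm8 W ∧ (∀ e ∈ E₁, W e = W₁ e) ∧ (∀ e ∈ E₂, W e = W₂ e) := by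
  classical
  obtain ⟨F₁, hF₁t, hF₁f⟩ := exists_pot W₁ h₁
  obtain ⟨F₂, hF₂t, hF₂f⟩ := exists_pot W₂ h₂
  -- near an `E₁` edge, the correction vanishes
  have hX1 : ∀ e ∈ E₁, ∀ f, adjF e f → glueX E₂ F₁ F₂ f = 0 := by
    intro e he f hadj
    unfold glueX
    rw [if_neg]
    rintro ⟨e₂, he₂, hadj₂⟩
    have hc1 := adjF_base hadj
    have hc2 := adjF_base hadj₂
    have hlt : eDist e.1 e₂.1 < 2 := by
      apply close_lt_two <;>
        (rcases hc1.1 with ha | ha <;> rcases hc2.1 with hb | hb <;>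
         rcases hc1.2 with hc | hc <;> rcases hc2.2 with hd' | hd' <;> omega)
    have hge := hd e he e₂ he₂ e.1 (Set.mem_insert _ _) e₂.1 (Set.mem_insert _ _)
    linarith
  -- near an `E₂` edge, the correction is `F₁ + F₂`
  have hX2 : ∀ e ∈ E₂, ∀ f, adjF e f → glueX E₂ F₁ F₂ f = F₁ f + F₂ f := by
    intro e he f hadj
    unfold glueX
    rw [if_pos ⟨e, he, hadj⟩]
  refine ⟨fun e => if e.2 then glueG E₂ F₁ F₂ e.1 + glueG E₂ F₁ F₂ (e.1.1, e.1.2 - 1)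
      else glueG E₂ F₁ F₂ (e.1.1 - 1, e.1.2) + glueG E₂ F₁ F₂ e.1, ?_, ?_, ?_⟩
  · intro v
    exact (by decide : ∀ a b c d : ZMod 2,
        (a + b) + (b + c) + (d + c) + (a + d) = 0)
      (glueG E₂ F₁ F₂ (v.1 - 1, v.2)) (glueG E₂ F₁ F₂ (v.1 - 1, v.2 - 1))
      (glueG E₂ F₁ F₂ (v.1, v.2 - 1)) (glueG E₂ F₁ F₂ v)
  · rintro ⟨p, b⟩ he
    cases b
    · show glueG E₂ F₁ F₂ (p.1 - 1, p.2) + glueG E₂ F₁ F₂ p = W₁ (p, false)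
      have z1 : glueX E₂ F₁ F₂ (p.1 - 1, p.2) = 0 := hX1 _ he _ (by simp [adjF])
      have z2 : glueX E₂ F₁ F₂ p = 0 := hX1 _ he _ (by simp [adjF])
      rw [hF₁f p]
      unfold glueG
      rw [z1, z2, add_zero, add_zero]
    · show glueG E₂ F₁ F₂ p + glueG E₂ F₁ F₂ (p.1, p.2 - 1) = W₁ (p, true)
      have z1 : glueX E₂ F₁ F₂ p = 0 := hX1 _ he _ (by simp [adjF])
      have z2 : glueX E₂ F₁ F₂ (p.1, p.2 - 1) = 0 := hX1 _ he _ (by simp [adjF])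
      rw [hF₁t p]
      unfold glueG
      rw [z1, z2, add_zero, add_zero]
  · rintro ⟨p, b⟩ he
    cases b
    · show glueG E₂ F₁ F₂ (p.1 - 1, p.2) + glueG E₂ F₁ F₂ p = W₂ (p, false)
      have z1 : glueX E₂ F₁ F₂ (p.1 - 1, p.2) = F₁ (p.1 - 1, p.2) + F₂ (p.1 - 1, p.2) :=
        hX2 _ he _ (by simp [adjF])
      have z2 : glueX E₂ F₁ F₂ p = F₁ p + F₂ p := hX2 _ he _ (by simp [adjF])
      rw [hF₂f p]
      unfold glueG
      rw [z1, z2]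
      exact (by decide : ∀ a b c d : ZMod 2,
        (a + (a + b)) + (c + (c + d)) = b + d) _ _ _ _
    · show glueG E₂ F₁ F₂ p + glueG E₂ F₁ F₂ (p.1, p.2 - 1) = W₂ (p, true)
      have z1 : glueX E₂ F₁ F₂ p = F₁ p + F₂ p := hX2 _ he _ (by simp [adjF])
      have z2 : glueX E₂ F₁ F₂ (p.1, p.2 - 1) = F₁ (p.1, p.2 - 1) + F₂ (p.1, p.2 - 1) :=
        hX2 _ he _ (by simp [adjF])
      rw [hF₂t p]
      unfold glueG
      rw [z1, z2]
      exact (by decide : ∀ a b c d : ZMod 2,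
        (a + (a + b)) + (c + (c + d)) = b + d) _ _ _ _
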